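/- arXiv:2508.12874 — 2 statements merged into one kernel-verified Lean document; each statement's English description precedes it below -/
import Mathlib

section
/- With notation as above (φ, ψ continuous 1-periodic, Φ their primitive, F(f̃) = ∫₀¹ (Φ(θ) − Φ(f̃(θ)))ψ(θ)dθ on the group of homeomorphisms of ℝ commuting with T), the coboundary δF(f̃,g̃) = F(f̃) + F(g̃) − F(f̃ ∘ g̃) is invariant under replacing f̃ by Tᵐ f̃ and g̃ by Tⁿ g̃ for any m, n ∈ ℤ; hence δF descends to a well-defined real-valued 2-cocycle on the quotient group of circle homeomorphisms. -/
lemma lift_int_aux (f : ℝ → ℝ) (hf : ∀ x, f (x + 1) = f x + 1) :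
    ∀ (n : ℤ) (x : ℝ), f (x + n) = f x + n := by
  have hf' : ∀ x, f (x - 1) = f x - 1 := by
    intro x
    have := hf (x - 1)
    have e : x - 1 + 1 = x := by ring
    rw [e] at this
    linarith
  intro n
  induction n using Int.induction_on with
  | zero => simp
  | succ k ih =>
      intro x
      have h2 := ih x
      have h1 := hf (x + (k : ℝ))
      push_cast at h2 ⊢
      have e : x + ((k : ℝ) + 1) = x + (k : ℝ) + 1 := by ring
      rw [e, h1, h2]; ring
  | pred k ih =>
      intro x
      have h2 := ih x
      have h1 := hf' (x + -(k : ℝ))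
      push_cast at h2 ⊢
      have e : x + (-(k : ℝ) - 1) = x + -(k : ℝ) - 1 := by ring
      rw [e, h1, h2]; ring

/-- With `Φ` continuous satisfying `Φ (θ + n) = Φ θ + n A` and `ψ` continuous 1-periodic,
set `F f̃ = ∫₀¹ (Φ θ - Φ (f̃ θ)) ψ θ dθ` on lifts (homeomorphisms of `ℝ` commuting with
`T x = x + 1`). The coboundary `δF (f̃, g̃) = F f̃ + F g̃ - F (f̃ ∘ g̃)` is invariant under
replacing `f̃` by `Tᵐ f̃` and `g̃` by `Tⁿ g̃`; hence it descends to a well-defined real-valued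
2-cocycle `c` on the quotient group of circle homeomorphisms. -/
theorem stmt_7 (Φ ψ : ℝ → ℝ) (A : ℝ) (hΦc : Continuous Φ)
    (hΦ : ∀ (n : ℤ) (θ : ℝ), Φ (θ + n) = Φ θ + n * A)
    (hψ : Continuous ψ) (hψp : Function.Periodic ψ 1) :
    ∃ c : (ℝ ≃ₜ ℝ) → (ℝ ≃ₜ ℝ) → ℝ,
      (∀ f g : ℝ ≃ₜ ℝ, (∀ x, f (x + 1) = f x + 1) → (∀ x, g (x + 1) = g x + 1) →
        ∀ m n : ℤ,
          (∫ θ in (0:ℝ)..1, (Φ θ - Φ (f θ + m)) * ψ θ)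
          + (∫ θ in (0:ℝ)..1, (Φ θ - Φ (g θ + n)) * ψ θ)
          - (∫ θ in (0:ℝ)..1, (Φ θ - Φ (f (g θ + n) + m)) * ψ θ) = c f g)
      ∧ (∀ f g h : ℝ ≃ₜ ℝ,
          (∀ x, f (x + 1) = f x + 1) → (∀ x, g (x + 1) = g x + 1) →
          (∀ x, h (x + 1) = h x + 1) →
          c g h - c (g.trans f) h + c f (h.trans g) - c f g = 0) := by
  set B := ∫ θ in (0:ℝ)..1, ψ θ with hB
  set F : (ℝ → ℝ) → ℝ := fun u => ∫ θ in (0:ℝ)..1, (Φ θ - Φ (u θ)) * ψ θ with hF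
  have key : ∀ (u v : ℝ → ℝ) (k : ℝ), Continuous u → (∀ θ, v θ = Φ (u θ) + k) →
      (∫ θ in (0:ℝ)..1, (Φ θ - v θ) * ψ θ) = F u - k * B := by
    intro u v k hu hv
    have heq : ∀ θ, (Φ θ - v θ) * ψ θ = (Φ θ - Φ (u θ)) * ψ θ - k * ψ θ := by
      intro θ; rw [hv θ]; ring
    rw [intervalIntegral.integral_congr (fun θ _ => heq θ)]
    have i1 : IntervalIntegrable (fun θ => (Φ θ - Φ (u θ)) * ψ θ)
        MeasureTheory.volume 0 1 :=
      Continuous.intervalIntegrable (by continuity) 0 1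
    have i2 : IntervalIntegrable (fun θ => k * ψ θ) MeasureTheory.volume 0 1 :=
      Continuous.intervalIntegrable (by continuity) 0 1
    rw [intervalIntegral.integral_sub i1 i2, intervalIntegral.integral_const_mul]
  refine ⟨fun f g => F f + F g - F (⇑f ∘ ⇑g), ?_, ?_⟩
  · intro f g hf hg m n
    have h1 := key f (fun θ => Φ (f θ + m)) (m * A) f.continuous
      (fun θ => hΦ m (f θ))
    have h2 := key g (fun θ => Φ (g θ + n)) (n * A) g.continuous
      (fun θ => hΦ n (g θ))
    have h3 := key (⇑f ∘ ⇑g) (fun θ => Φ (f (g θ + n) + m)) (((n + m : ℤ) : ℝ) * A)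
      (f.continuous.comp g.continuous) (fun θ => by
        show Φ (f (g θ + (n : ℝ)) + (m : ℝ)) = Φ ((⇑f ∘ ⇑g) θ) + ((n + m : ℤ) : ℝ) * A
        rw [lift_int_aux f hf n (g θ)]
        have e : f (g θ) + (n : ℝ) + (m : ℝ) = f (g θ) + ((n + m : ℤ) : ℝ) := by
          push_cast; ring
        rw [e, hΦ (n + m)]
        rfl)
    rw [h1, h2, h3]
    push_cast
    ring
  · intro f g h hf hg hh
    show F ⇑g + F ⇑h - F (⇑g ∘ ⇑h)
        - (F ⇑(g.trans f) + F ⇑h - F (⇑(g.trans f) ∘ ⇑h))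
        + (F ⇑f + F ⇑(h.trans g) - F (⇑f ∘ ⇑(h.trans g)))
        - (F ⇑f + F ⇑g - F (⇑f ∘ ⇑g)) = 0
    have e1 : ⇑(g.trans f) = ⇑f ∘ ⇑g := rfl
    have e2 : ⇑(h.trans g) = ⇑g ∘ ⇑h := rfl
    rw [e1, e2]
    have e3 : (⇑f ∘ ⇑g) ∘ ⇑h = ⇑f ∘ (⇑g ∘ ⇑h) := rfl
    rw [e3]
    ring
end

section
/- Thurston's trick (algebraic core): Let G be a group and φ ∈ G. Suppose u, v, g ∈ G are such that the supports satisfy: u φ u⁻¹ φ⁻¹ = a·b where a has support in a set S₁ and b has support in φ(S₁); v and (gφ)v⁻¹(gφ)⁻¹ have supports in S₁ and gφ(S₁) respectively; and S₁, φ(S₁), gφ(S₁) are pairwise disjoint. Then [u,v] = [[u,φ],[v,gφg⁻¹]]. In particular [u,v] lies in the normal closure of φ whenever [u,φ] and [v, gφg⁻¹] do. -/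
/-- Elements with disjoint supports commute (faithful action). -/
lemma commute_of_disjoint_support {G X : Type*} [Group G] [MulAction G X]
    [FaithfulSMul G X] (p q : G) (A B : Set X) (hAB : Disjoint A B)
    (hp : ∀ x, p • x ≠ x → x ∈ A) (hq : ∀ x, q • x ≠ x → x ∈ B) :
    p * q = q * p := by
  apply FaithfulSMul.eq_of_smul_eq_smul (α := X)
  intro x
  simp only [mul_smul]
  by_cases hpx : p • x = x
  · by_cases hqx : q • x = x
    · simp [hpx, hqx]
    · have hqxB : q • x ∈ B := by
        apply hq
        intro h
        exact hqx (by have := congrArg (q⁻¹ • ·) h; simpa [smul_smul] using this)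
      have : p • (q • x) = q • x := by
        by_contra h
        exact hAB.ne_of_mem (hp _ h) hqxB rfl
      rw [this, hpx]
  · have hxA : x ∈ A := hp x hpx
    have hpxA : p • x ∈ A := by
      apply hp
      intro h
      exact hpx (by have := congrArg (p⁻¹ • ·) h; simpa [smul_smul] using this)
    have hq1 : q • x = x := by
      by_contra h
      exact hAB.ne_of_mem hxA (hq _ h) rfl
    have hq2 : q • (p • x) = p • x := by
      by_contra h
      exact hAB.ne_of_mem hpxA (hq _ h) rfl
    rw [hq1, hq2]

open scoped commutatorElement

/-- Thurston's trick (algebraic core): for a faithful action of `G` on `X`, if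
`[u,φ] = u · (φ u⁻¹ φ⁻¹)` has its factors supported in `S₁` and `φ(S₁)`,
`[v, gφg⁻¹] = v · ((gφ) v⁻¹ (gφ)⁻¹)` has its factors supported in `S₁` and `gφ(S₁)`
(here `g` commutes with `v`, since `g` is the identity on the support of `v`), and
`S₁, φ(S₁), gφ(S₁)` are pairwise disjoint, then `[u,v] = [[u,φ],[v,gφg⁻¹]]`; in
particular `[u,v]` lies in the normal closure of `φ`. -/
theorem stmt_11 {G X : Type*} [Group G] [MulAction G X] [FaithfulSMul G X]
    (φ u v g : G) (S₁ : Set X)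
    (hu : ∀ x, u • x ≠ x → x ∈ S₁)
    (hb : ∀ x, (φ * u⁻¹ * φ⁻¹) • x ≠ x → x ∈ (fun y => φ • y) '' S₁)
    (hv : ∀ x, v • x ≠ x → x ∈ S₁)
    (hd : ∀ x, ((g * φ) * v⁻¹ * (g * φ)⁻¹) • x ≠ x → x ∈ (fun y => (g * φ) • y) '' S₁)
    (hgv : g * v = v * g)
    (h₁ : Disjoint S₁ ((fun y => φ • y) '' S₁))
    (h₂ : Disjoint S₁ ((fun y => (g * φ) • y) '' S₁))
    (h₃ : Disjoint ((fun y => φ • y) '' S₁) ((fun y => (g * φ) • y) '' S₁)) :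
    ⁅u, v⁆ = ⁅⁅u, φ⁆, ⁅v, g * φ * g⁻¹⁆⁆
    ∧ ⁅u, v⁆ ∈ Subgroup.normalClosure {φ} := by
  set b : G := φ * u⁻¹ * φ⁻¹ with hbdef
  set d : G := (g * φ) * v⁻¹ * (g * φ)⁻¹ with hddef
  have huφ : ⁅u, φ⁆ = u * b := by
    simp [commutatorElement_def, hbdef, mul_assoc]
  have hvg' : g⁻¹ * v⁻¹ = v⁻¹ * g⁻¹ := by
    rw [← mul_inv_rev, ← mul_inv_rev, hgv]
  have hvgd : ⁅v, g * φ * g⁻¹⁆ = v * d := by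
    have h' : v * (g * φ * g⁻¹) * v⁻¹ = v * g * φ * (v⁻¹ * g⁻¹) := by
      rw [← hvg']; group
    rw [commutatorElement_def, h', hddef]
    group
  -- commuting facts
  have hbv : Commute b v :=
    commute_of_disjoint_support b v _ _ h₁.symm hb hv
  have hbd : Commute b d :=
    commute_of_disjoint_support b d _ _ h₃ hb hd
  have hdu : Commute d u :=
    commute_of_disjoint_support d u _ _ h₂.symm hd hu
  have c1 : Commute b (v * d) := hbv.mul_right hbd
  have e : b * (v * d) * b⁻¹ = v * d := by
    rw [c1.eq, mul_assoc, mul_inv_cancel, mul_one]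
  have hdu' : d * u⁻¹ = u⁻¹ * d := hdu.inv_right.eq
  have key : ⁅u * b, v * d⁆ = ⁅u, v⁆ := by
    calc ⁅u * b, v * d⁆
        = u * (b * (v * d) * b⁻¹) * u⁻¹ * (v * d)⁻¹ := by
          rw [commutatorElement_def]; group
      _ = u * (v * d) * u⁻¹ * (v * d)⁻¹ := by rw [e]
      _ = u * v * (d * u⁻¹) * (d⁻¹ * v⁻¹) := by rw [mul_inv_rev]; group
      _ = u * v * (u⁻¹ * d) * (d⁻¹ * v⁻¹) := by rw [hdu']
      _ = u * v * u⁻¹ * v⁻¹ := by group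
      _ = ⁅u, v⁆ := (commutatorElement_def u v).symm
  constructor
  · rw [huφ, hvgd, key]
  · set N := Subgroup.normalClosure ({φ} : Set G) with hN
    have hφ : φ ∈ N := Subgroup.subset_normalClosure rfl
    haveI : N.Normal := Subgroup.normalClosure_normal
    have m1 : ⁅u, φ⁆ ∈ N := by
      have h1 : u * φ * u⁻¹ ∈ N := this.conj_mem _ hφ u
      have := mul_mem h1 (inv_mem hφ)
      simpa [commutatorElement_def, mul_assoc] using this
    have m2 : ⁅v, g * φ * g⁻¹⁆ ∈ N := by
      have h1 : g * φ * g⁻¹ ∈ N := this.conj_mem _ hφ g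
      have h2 : v * (g * φ * g⁻¹) * v⁻¹ ∈ N := this.conj_mem _ h1 v
      have := mul_mem h2 (inv_mem h1)
      simpa [commutatorElement_def, mul_assoc] using this
    have : ⁅⁅u, φ⁆, ⁅v, g * φ * g⁻¹⁆⁆ ∈ N := by
      rw [commutatorElement_def]
      exact mul_mem (mul_mem (mul_mem m1 m2) (inv_mem m1)) (inv_mem m2)
    rw [huφ, hvgd, key] at this
    exact this
end
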